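/- Let (A, d) be a differential graded module with involution * satisfying d(a*) = (da)*. With the Leibniz differential d on A^{⊗(n+1)} and r_n(a_0 ⊗ ... ⊗ a_n) = ϱ(-1)^{Σ_{0<i<j≤n}|a_i||a_j|} a_0* ⊗ a_n* ⊗ ... ⊗ a_1*, one has d ∘ r_n = r_n ∘ d. -/

import Mathlib

/-- The tuple obtained from `a` by replacing its `i`-th entry (of degree `deg i`)
by an element `x` of degree `deg i - 1`. -/
def updTuple {A : ℕ → Type*} {m : ℕ} (deg : Fin m → ℕ) (a : ∀ i, A (deg i)) (i : Fin m)
    (x : A (deg i - 1)) : ∀ j, A (Function.update deg i (deg i - 1) j) := fun j => by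
  by_cases h : j = i
  · rw [h, Function.update_self]; exact x
  · rw [Function.update_of_ne h]; exact a j


theorem mpr_heq {α β : Sort u} (h : α = β) (x : β) : HEq (Eq.mpr h x) x := by
  subst h; rfl

lemma updTuple_eq {A : ℕ → Type*} {m : ℕ} (deg : Fin m → ℕ) (a : ∀ i, A (deg i)) (i : Fin m)
    (x : A (deg i - 1)) {j : Fin m} (h : j = i) : HEq (updTuple deg a i x j) x := by
  simp only [updTuple, dif_pos h]
  exact (mpr_heq _ _).trans (mpr_heq _ _)

lemma updTuple_ne {A : ℕ → Type*} {m : ℕ} (deg : Fin m → ℕ) (a : ∀ i, A (deg i)) (i : Fin m)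
    (x : A (deg i - 1)) {j : Fin m} (h : j ≠ i) : HEq (updTuple deg a i x j) (a j) := by
  simp only [updTuple, dif_neg h]
  exact mpr_heq _ _

lemma zero_heq {A : ℕ → Type*} [∀ p, AddCommGroup (A p)] {p q : ℕ} (h : p = q) :
    HEq (0 : A p) (0 : A q) := by subst h; rfl

lemma apply_heq {A B : ℕ → Type*} (F : ∀ p, A p → B p) {p q : ℕ} (h : p = q)
    {x : A p} {y : A q} (hxy : HEq x y) : HEq (F p x) (F q y) := by
  subst h; rw [eq_of_heq hxy]

lemma ten_congr {K : Type*} [CommRing K] {A : ℕ → Type*} [∀ p, AddCommGroup (A p)]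
    [∀ p, Module K (A p)] {M : Type*} [AddCommGroup M] [Module K M] {m : ℕ}
    (ten : ∀ deg : Fin m → ℕ, MultilinearMap K (fun i => A (deg i)) M)
    {d1 d2 : Fin m → ℕ} (h : d1 = d2) {a1 : ∀ i, A (d1 i)} {a2 : ∀ i, A (d2 i)}
    (ha : ∀ j, HEq (a1 j) (a2 j)) : ten d1 a1 = ten d2 a2 := by
  subst h
  congr 1
  exact funext fun j => eq_of_heq (ha j)

lemma d_eq_zero {K : Type*} [CommRing K] {A : ℕ → Type*} [∀ p, AddCommGroup (A p)]
    [∀ p, Module K (A p)] (d : ∀ p : ℕ, A p →ₗ[K] A (p - 1)) (hd0 : d 0 = 0)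
    {p : ℕ} (h : p = 0) (x : A p) : d p x = 0 := by
  subst h; rw [hd0]; rfl

lemma neg_one_pow_parity {K : Type*} [Monoid K] [HasDistribNeg K] {a b : ℕ}
    (h : (a : ZMod 2) = (b : ZMod 2)) : (-1 : K) ^ a = (-1 : K) ^ b := by
  have h2 := (ZMod.natCast_eq_natCast_iff' a b 2).mp h
  rcases Nat.even_or_odd a with ha | ha
  · have hb : Even b := by rw [Nat.even_iff] at ha ⊢; omega
    rw [ha.neg_one_pow, hb.neg_one_pow]
  · have hb : Odd b := by rw [Nat.odd_iff] at ha ⊢; omega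
    rw [ha.neg_one_pow, hb.neg_one_pow]

lemma cast_update {n : ℕ} (deg : Fin (n+1) → ℕ) (i : Fin (n+1)) (h1 : 1 ≤ deg i) (k : Fin (n+1)) :
    ((Function.update deg i (deg i - 1) k : ℕ) : ZMod 2)
      = Function.update (fun t => ((deg t : ℕ) : ZMod 2)) i (((deg i : ℕ) : ZMod 2) - 1) k := by
  by_cases hk : k = i
  · subst hk; rw [Function.update_self, Function.update_self, Nat.cast_sub h1, Nat.cast_one]
  · rw [Function.update_of_ne hk, Function.update_of_ne hk]

lemma neg_val {n : ℕ} (i : Fin (n+1)) (h : i ≠ 0) : ((-i : Fin (n+1)) : ℕ) = n + 1 - i := by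
  have h1 : (i:ℕ) ≠ 0 := fun hh => h (Fin.ext (by simp [hh]))
  have h2 := i.is_lt
  rw [Fin.coe_neg, Nat.mod_eq_of_lt (by omega)]

lemma key_parity (n : ℕ) (k : Fin (n+1)) (f : Fin (n+1) → ZMod 2) :
    ((∑ j : Fin (n+1), ∑ t : Fin (n+1),
        if 0 < (t:ℕ) ∧ (t:ℕ) < (j:ℕ) then f t * f j else 0)
      + ∑ j : Fin (n+1), if (j:ℕ) < (k:ℕ) then f (-j) else 0)
    = (∑ j : Fin (n+1), if (j:ℕ) < ((-k : Fin (n+1)):ℕ) then f j else 0)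
      + ∑ j : Fin (n+1), ∑ t : Fin (n+1),
          if 0 < (t:ℕ) ∧ (t:ℕ) < (j:ℕ) then
            Function.update f (-k) (f (-k) - 1) t * Function.update f (-k) (f (-k) - 1) j
          else 0 := by
  have stepA : (∑ j : Fin (n+1), ∑ t : Fin (n+1),
          if 0 < (t:ℕ) ∧ (t:ℕ) < (j:ℕ) then
            Function.update f (-k) (f (-k) - 1) t * Function.update f (-k) (f (-k) - 1) j
          else 0)
      = (∑ j : Fin (n+1), ∑ t : Fin (n+1),
          if 0 < (t:ℕ) ∧ (t:ℕ) < (j:ℕ) then f t * f j else 0)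
        + ((∑ j : Fin (n+1), if 0 < ((-k : Fin (n+1)):ℕ) ∧ ((-k : Fin (n+1)):ℕ) < (j:ℕ) then f j else 0)
        + ∑ t : Fin (n+1), if 0 < (t:ℕ) ∧ (t:ℕ) < ((-k : Fin (n+1)):ℕ) then f t else 0) := by
    have hterm : ∀ j t : Fin (n+1),
        (if 0 < (t:ℕ) ∧ (t:ℕ) < (j:ℕ) then
            Function.update f (-k) (f (-k) - 1) t * Function.update f (-k) (f (-k) - 1) j
          else 0)
        = (if 0 < (t:ℕ) ∧ (t:ℕ) < (j:ℕ) then f t * f j else 0)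
          + ((if t = -k then (if 0 < ((-k : Fin (n+1)):ℕ) ∧ ((-k : Fin (n+1)):ℕ) < (j:ℕ) then f j else 0) else 0)
          + (if j = -k then (if 0 < (t:ℕ) ∧ (t:ℕ) < ((-k : Fin (n+1)):ℕ) then f t else 0) else 0)) := by
      intro j t
      by_cases ht : t = -k <;> by_cases hj : j = -k
      · subst ht; subst hj; simp
      · subst ht
        rw [Function.update_self, Function.update_of_ne hj, if_pos rfl, if_neg hj]
        by_cases hC : 0 < ((-k : Fin (n+1)):ℕ) ∧ ((-k : Fin (n+1)):ℕ) < (j:ℕ)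
        · rw [if_pos hC, if_pos hC, if_pos hC, sub_one_mul, CharTwo.sub_eq_add]; ring
        · rw [if_neg hC, if_neg hC, if_neg hC]; ring
      · subst hj
        rw [Function.update_self, Function.update_of_ne ht, if_neg ht, if_pos rfl]
        by_cases hC : 0 < (t:ℕ) ∧ (t:ℕ) < ((-k : Fin (n+1)):ℕ)
        · rw [if_pos hC, if_pos hC, if_pos hC, mul_sub_one, CharTwo.sub_eq_add]; ring
        · rw [if_neg hC, if_neg hC, if_neg hC]; ring
      · rw [Function.update_of_ne ht, Function.update_of_ne hj, if_neg ht, if_neg hj]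
        ring
    simp only [hterm, Finset.sum_add_distrib]
    congr 1
    congr 1
    · refine Finset.sum_congr rfl fun j _ => ?_
      rw [Finset.sum_ite_eq' Finset.univ (-k)
        (fun _ => if 0 < ((-k : Fin (n+1)):ℕ) ∧ ((-k : Fin (n+1)):ℕ) < (j:ℕ) then f j else 0),
        if_pos (Finset.mem_univ _)]
    · have hj' : ∀ j : Fin (n+1),
          (∑ t : Fin (n+1), if j = -k then (if 0 < (t:ℕ) ∧ (t:ℕ) < ((-k : Fin (n+1)):ℕ) then f t else 0) else 0)
          = if j = -k then (∑ t : Fin (n+1), if 0 < (t:ℕ) ∧ (t:ℕ) < ((-k : Fin (n+1)):ℕ) then f t else 0) else 0 :=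
        fun j => by split <;> simp
      rw [Finset.sum_congr rfl (fun j _ => hj' j), Finset.sum_ite_eq' Finset.univ (-k) _,
        if_pos (Finset.mem_univ _)]
  -- Step B : reindex the second sum on the left
  have stepB : (∑ j : Fin (n+1), if (j:ℕ) < (k:ℕ) then f (-j) else 0)
      = ∑ j : Fin (n+1), if (((-j : Fin (n+1)):ℕ)) < (k:ℕ) then f j else 0 := by
    rw [← Equiv.sum_comp (Equiv.neg (Fin (n+1)))
      (fun j => if ((j : Fin (n+1)):ℕ) < (k:ℕ) then f (-j) else 0)]
    simp [neg_neg]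
  rw [stepA, stepB]
  -- Step C : pointwise identity
  have stepC : (∑ j : Fin (n+1), if (((-j : Fin (n+1)):ℕ)) < (k:ℕ) then f j else 0)
      = ∑ j : Fin (n+1),
          ((if (j:ℕ) < ((-k : Fin (n+1)):ℕ) then f j else 0)
          + ((if 0 < ((-k : Fin (n+1)):ℕ) ∧ ((-k : Fin (n+1)):ℕ) < (j:ℕ) then f j else 0)
          + (if 0 < (j:ℕ) ∧ (j:ℕ) < ((-k : Fin (n+1)):ℕ) then f j else 0))) := by
    refine Finset.sum_congr rfl fun j _ => ?_
    by_cases hk0 : k = 0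
    · subst hk0
      simp only [neg_zero, Fin.val_zero]
      simp only [Nat.not_lt_zero, false_and, and_false, ↓reduceIte]
      ring
    · have hkv : ((-k : Fin (n+1)):ℕ) = n + 1 - k := neg_val k hk0
      have hk1 : (k:ℕ) ≠ 0 := fun hh => hk0 (Fin.ext (by simp [hh]))
      have hk2 := k.is_lt
      by_cases hj0 : j = 0
      · subst hj0
        simp only [neg_zero, Fin.val_zero]
        simp only [show 0 < ((-k : Fin (n+1)):ℕ) by omega, show 0 < (k:ℕ) by omega, show ¬ ((-k : Fin (n+1)):ℕ) < 0 by omega,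
          lt_self_iff_false, true_and, false_and, and_false, ↓reduceIte]
        ring
      · have hjv : ((-j : Fin (n+1)):ℕ) = n + 1 - j := neg_val j hj0
        have hj1 : (j:ℕ) ≠ 0 := fun hh => hj0 (Fin.ext (by simp [hh]))
        have hj2 := j.is_lt
        rcases lt_trichotomy (j:ℕ) ((-k : Fin (n+1)):ℕ) with h | h | h
        · rw [if_neg (by omega), if_pos (by omega), if_neg (by omega), if_pos (by omega)]
          rw [zero_add, CharTwo.add_self_eq_zero]
        · rw [if_neg (by omega), if_neg (by omega), if_neg (by omega), if_neg (by omega)]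
          ring
        · rw [if_pos (by omega), if_neg (by omega), if_pos (by omega), if_neg (by omega)]
          ring
  rw [stepC, Finset.sum_add_distrib]
  ring_nf
  rw [Finset.sum_add_distrib]
  ring
/-- For a differential graded module `(A, d)` with an involution `*`
commuting with `d`, the graded Leibniz differential and the reflection
`r_n(a₀ ⊗ ⋯ ⊗ a_n) = ϱ (-1)^{∑_{0<i<j≤n}|a_i||a_j|} a₀* ⊗ a_n* ⊗ ⋯ ⊗ a₁*` on
`A^{⊗(n+1)}` commute: `d ∘ r_n = r_n ∘ d`.  Here `M` plays the role of `A^{⊗(n+1)}`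
and `ten deg` the pure-tensor multilinear map. -/
theorem stmt6 {K : Type*} [CommRing K] {A : ℕ → Type*}
    [∀ p, AddCommGroup (A p)] [∀ p, Module K (A p)]
    {M : Type*} [AddCommGroup M] [Module K M] (n : ℕ)
    (ten : ∀ deg : Fin (n + 1) → ℕ, MultilinearMap K (fun i => A (deg i)) M)
    (hspan : Submodule.span K {x : M | ∃ (deg : Fin (n + 1) → ℕ) (a : ∀ i, A (deg i)),
      x = ten deg a} = ⊤)
    (d : ∀ p : ℕ, A p →ₗ[K] A (p - 1)) (hd0 : d 0 = 0)
    (hdd : ∀ p (a : A p), d (p - 1) (d p a) = 0)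
    (star : ∀ p : ℕ, A p →ₗ[K] A p)
    (hstar2 : ∀ p (a : A p), star p (star p a) = a)
    (hdstar : ∀ p (a : A p), d p (star p a) = star (p - 1) (d p a))
    (ϱ : K) (hϱ : ϱ = 1 ∨ ϱ = -1)
    (r D : Module.End K M)
    (hrf : ∀ (deg : Fin (n + 1) → ℕ) (a : ∀ i, A (deg i)),
      r (ten deg a) =
        (ϱ * (-1 : K) ^ (∑ j : Fin (n + 1), ∑ i : Fin (n + 1),
            if 0 < (i : ℕ) ∧ (i : ℕ) < (j : ℕ) then deg i * deg j else 0)) •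
          ten (fun i => deg (-i)) (fun i => star (deg (-i)) (a (-i))))
    (hDf : ∀ (deg : Fin (n + 1) → ℕ) (a : ∀ i, A (deg i)),
      D (ten deg a) =
        ∑ i : Fin (n + 1),
          ((-1 : K) ^ (∑ j : Fin (n + 1), if (j : ℕ) < (i : ℕ) then deg j else 0)) •
            ten (Function.update deg i (deg i - 1))
              (updTuple deg a i (d (deg i) (a i)))) :
    D * r = r * D := by

  refine LinearMap.ext_on hspan ?_
  rintro x ⟨deg, a, rfl⟩
  simp only [Module.End.mul_apply, hrf, hDf, map_smul, map_sum, Finset.smul_sum]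
  refine Fintype.sum_equiv (Equiv.neg (Fin (n+1))) _ _ fun k => ?_
  dsimp only [Equiv.neg, Function.Involutive.coe_toPerm]
  by_cases h0 : deg (-k) = 0
  · -- both sides vanish since `d` kills degree-zero entries
    have hL0 : updTuple (fun t => deg (-t)) (fun t => (star (deg (-t))) (a (-t))) k
        ((d (deg (-k))) ((star (deg (-k))) (a (-k)))) k = 0 := by
      refine eq_of_heq ((updTuple_eq _ _ _ _ rfl).trans ?_)
      rw [d_eq_zero d hd0 h0]
      exact zero_heq (by simp)
    have hR0 : updTuple deg a (-k) ((d (deg (-k))) (a (-k))) (-k) = 0 := by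
      refine eq_of_heq ((updTuple_eq _ _ _ _ rfl).trans ?_)
      rw [d_eq_zero d hd0 h0]
      exact zero_heq (by simp)
    rw [show (ten (Function.update (fun i => deg (-i)) k (deg (-k) - 1)))
          (updTuple (fun i => deg (-i)) (fun i => (star (deg (-i))) (a (-i))) k
            ((d (deg (-k))) ((star (deg (-k))) (a (-k))))) = 0 from
        MultilinearMap.map_coord_zero _ k hL0,
      show (ten fun i => Function.update deg (-k) (deg (-k) - 1) (-i)) (fun i =>
          (star (Function.update deg (-k) (deg (-k) - 1) (-i)))
            (updTuple deg a (-k) ((d (deg (-k))) (a (-k))) (-i))) = 0 from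
        MultilinearMap.map_coord_zero _ k (by
          show (star (Function.update deg (-k) (deg (-k) - 1) (-k)))
            (updTuple deg a (-k) ((d (deg (-k))) (a (-k))) (-k)) = 0
          rw [hR0, map_zero]),
      smul_zero, smul_zero, smul_zero, smul_zero]
  · have h1 : 1 ≤ deg (-k) := Nat.one_le_iff_ne_zero.mpr h0
    have hFneq : ∀ j : Fin (n+1), j ≠ k → -j ≠ -k := fun j hj hh => hj (neg_inj.mp hh)
    have hF : (Function.update (fun t => deg (-t)) k (deg (-k) - 1))
        = (fun j => Function.update deg (-k) (deg (-k) - 1) (-j)) := by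
      funext j
      by_cases hj : j = k
      · subst hj; rw [Function.update_self, Function.update_self]
      · rw [Function.update_of_ne hj, Function.update_of_ne (hFneq j hj)]
    have hT : ∀ j, HEq
        (updTuple (fun t => deg (-t)) (fun t => (star (deg (-t))) (a (-t))) k
          ((d (deg (-k))) ((star (deg (-k))) (a (-k)))) j)
        ((fun j => (star (Function.update deg (-k) (deg (-k) - 1) (-j)))
          (updTuple deg a (-k) ((d (deg (-k))) (a (-k))) (-j))) j) := by
      intro j
      by_cases hj : j = k
      · subst hj
        refine (updTuple_eq _ _ _ _ rfl).trans ?_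
        rw [hdstar]
        exact apply_heq (B := A) (fun p x => (star p) x)
          (by simp) (updTuple_eq _ _ _ _ rfl).symm
      · refine (updTuple_ne _ _ _ _ hj).trans ?_
        exact apply_heq (B := A) (fun p x => (star p) x)
          (Function.update_of_ne (hFneq j hj) _ _).symm
          (updTuple_ne _ _ _ _ (hFneq j hj)).symm
    rw [ten_congr ten hF hT, smul_smul, smul_smul]
    congr 1
    have hexp : (-1 : K) ^
          ((∑ j : Fin (n+1), ∑ i : Fin (n+1), if 0 < (i:ℕ) ∧ (i:ℕ) < (j:ℕ) then deg i * deg j else 0)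
            + ∑ j : Fin (n+1), if (j:ℕ) < (k:ℕ) then deg (-j) else 0)
        = (-1 : K) ^
          ((∑ x : Fin (n+1), if (x:ℕ) < ((-k : Fin (n+1)):ℕ) then deg x else 0)
            + ∑ x : Fin (n+1), ∑ y : Fin (n+1), if 0 < (y:ℕ) ∧ (y:ℕ) < (x:ℕ) then
                Function.update deg (-k) (deg (-k) - 1) y * Function.update deg (-k) (deg (-k) - 1) x else 0) := by
      refine neg_one_pow_parity ?_
      push_cast
      simp only [apply_ite (Nat.cast : ℕ → ZMod 2), Nat.cast_zero, Nat.cast_mul,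
        cast_update deg (-k) h1]
      exact key_parity n k (fun t => ((deg t : ℕ) : ZMod 2))
    rw [mul_assoc, ← pow_add, hexp, pow_add]
    ring
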